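/- Let B be a C*-algebra, E a Hilbert B-module, and G a closed ternary ideal of E with B_G the closed linear span of {⟨g,g'⟩ : g, g' ∈ G}. Assume that for every x ∈ E there exists g ∈ G such that x·a = g·a for all a ∈ B_G. Then every x ∈ E decomposes uniquely as x = g + y with g ∈ G and y ∈ G^⊥ = {y ∈ E : ⟨y,g⟩ = 0 for all g ∈ G}; moreover G^⊥ is a closed ternary ideal of E, y·a = 0 for all y ∈ G^⊥ and a ∈ B_G, and ⟨g,g'⟩·⟨y,y'⟩ = 0 for all g, g' ∈ G and y, y' ∈ G^⊥. -/

import Mathlib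

open scoped RightActions

/-- The closed linear span of a subset of a topological `ℂ`-module. -/
noncomputable def clSpan {M : Type*} [AddCommMonoid M] [Module ℂ M] [TopologicalSpace M]
    (S : Set M) : Set M :=
  closure (Submodule.span ℂ S : Set M)

/-- A subset is a (complex) linear subspace. -/
def IsLinearSubspace {M : Type*} [AddCommMonoid M] [Module ℂ M] (K : Set M) : Prop :=
  (0 : M) ∈ K ∧ (∀ x ∈ K, ∀ y ∈ K, x + y ∈ K) ∧ ∀ (c : ℂ), ∀ x ∈ K, c • x ∈ K

/-- A closed two-sided ideal of a C*-algebra `B`. -/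
structure IsClosedTwoSidedIdeal {B : Type*} [NonUnitalCStarAlgebra B] (I : Set B) : Prop where
  isClosed : IsClosed I
  subspace : IsLinearSubspace I
  mul_mem_left : ∀ (b : B), ∀ a ∈ I, b * a ∈ I
  mul_mem_right : ∀ (b : B), ∀ a ∈ I, a * b ∈ I

/-- The Hilbert C⋆-module class as it stood in the older Mathlib: a right `A`-action
through `Aᵐᵒᵖ` and an inner product with `⟪x, y <• a⟫ = ⟪x, y⟫ * a`. -/
class RightCStarModule (A : outParam <| Type*) (E : Type*) [NonUnitalSemiring A] [StarRing A]
    [Module ℂ A] [AddCommGroup E] [Module ℂ E] [PartialOrder A] [SMul Aᵐᵒᵖ E] [Norm A] [Norm E]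
    extends Inner A E where
  inner_add_right {x} {y} {z} : inner x (y + z) = inner x y + inner x z
  inner_self_nonneg {x} : 0 ≤ inner x x
  inner_self {x} : inner x x = 0 ↔ x = 0
  inner_op_smul_right {a : A} {x y : E} : inner x (y <• a) = inner x y * a
  inner_smul_right_complex {z : ℂ} {x} {y} : inner x (z • y) = z • inner x y
  star_inner x y : star (inner x y) = inner y x
  norm_eq_sqrt_norm_inner_self x : ‖x‖ = √‖inner x x‖

section HilbertModule

variable (B : Type*) [NonUnitalCStarAlgebra B] [PartialOrder B] [StarOrderedRing B]
variable {E : Type*} [NormedAddCommGroup E] [NormedSpace ℂ E] [SMul Bᵐᵒᵖ E] [RightCStarModule B E]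

/-- `K ⊆ E` is an *ideal submodule* if it is the closed linear span of
`{x <• i : x ∈ E, i ∈ I}` for some closed two-sided ideal `I` of `B`. -/
def IsIdealSubmodule (K : Set E) : Prop :=
  ∃ I : Set B, IsClosedTwoSidedIdeal I ∧
    K = clSpan {z : E | ∃ x : E, ∃ i ∈ I, z = x <• i}

/-- A *ternary ideal* of a Hilbert `B`-module `E`: a linear subspace `K` with
`x <• ⟪k, y⟫ ∈ K` for all `x y ∈ E` and `k ∈ K`. -/
def IsTernaryIdeal (K : Set E) : Prop :=
  IsLinearSubspace K ∧ ∀ (x y : E), ∀ k ∈ K, x <• (inner B k y : B) ∈ K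

/-- `B_S`: the closed linear span in `B` of all inner products of elements of `S`. -/
noncomputable def rangeIdeal (S : Set E) : Set B :=
  clSpan {b : B | ∃ k ∈ S, ∃ k' ∈ S, b = (inner B k k' : B)}

/-- The orthogonal complement of a subset of a Hilbert `B`-module. -/
def perp (S : Set E) : Set E :=
  {x : E | ∀ s ∈ S, (inner B x s : B) = 0}

end HilbertModule


set_option linter.unusedSectionVars false


namespace RightCStarModule
variable {B : Type*} [NonUnitalCStarAlgebra B] [PartialOrder B] [StarOrderedRing B]
variable {E : Type*} [NormedAddCommGroup E] [NormedSpace ℂ E] [SMul Bᵐᵒᵖ E] [RightCStarModule B E]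

lemma inner_zero_right {x : E} : inner B x (0 : E) = 0 := by
  have h := RightCStarModule.inner_add_right (A := B) (x := x) (y := (0 : E)) (z := 0)
  rw [add_zero] at h
  calc inner B x (0 : E) = (inner B x 0 + inner B x 0) - inner B x 0 := by abel
  _ = 0 := by rw [← h, sub_self]

lemma inner_sub_right {x y z : E} : inner B x (y - z) = inner B x y - inner B x z := by
  rw [eq_sub_iff_add_eq, ← RightCStarModule.inner_add_right, sub_add_cancel]

lemma inner_add_left {x y z : E} : inner B (x + y) z = inner B x z + inner B y z := by
  rw [← RightCStarModule.star_inner z (x + y), RightCStarModule.inner_add_right, star_add,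
    RightCStarModule.star_inner, RightCStarModule.star_inner]

lemma inner_sub_left {x y z : E} : inner B (x - y) z = inner B x z - inner B y z := by
  rw [← RightCStarModule.star_inner z (x - y), RightCStarModule.inner_sub_right, star_sub,
    RightCStarModule.star_inner, RightCStarModule.star_inner]

lemma inner_zero_left {x : E} : inner B (0 : E) x = 0 := by
  rw [← RightCStarModule.star_inner x 0, RightCStarModule.inner_zero_right, star_zero]

lemma inner_op_smul_left {a : B} {x y : E} : inner B (x <• a) y = star a * inner B x y := by
  rw [← RightCStarModule.star_inner y (x <• a), RightCStarModule.inner_op_smul_right, star_mul,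
    RightCStarModule.star_inner]

lemma inner_smul_left_complex {z : ℂ} {x y : E} : inner B (z • x) y = star z • inner B x y := by
  rw [← RightCStarModule.star_inner y (z • x), RightCStarModule.inner_smul_right_complex, star_smul,
    RightCStarModule.star_inner]

lemma norm_sq_eq {x : E} : ‖x‖ ^ 2 = ‖inner B x x‖ := by
  rw [RightCStarModule.norm_eq_sqrt_norm_inner_self x, Real.sq_sqrt (norm_nonneg _)]

lemma isSelfAdjoint_inner_self {x : E} : IsSelfAdjoint (inner B x x) :=
  RightCStarModule.star_inner x x

end RightCStarModule

section Aux
variable {B : Type*} [NonUnitalCStarAlgebra B] [PartialOrder B] [StarOrderedRing B]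
variable {E : Type*} [NormedAddCommGroup E] [NormedSpace ℂ E] [SMul Bᵐᵒᵖ E] [RightCStarModule B E]

lemma my_ext_inner {v w : E} (h : ∀ u : E, (inner B u v : B) = inner B u w) : v = w := by
  have h0 : (inner B (v - w) (v - w) : B) = 0 := by
    rw [RightCStarModule.inner_sub_right, h (v - w), sub_self]
  exact sub_eq_zero.mp (RightCStarModule.inner_self.mp h0)

lemma my_op_smul_sub (y z : E) (a : B) : (y - z) <• a = y <• a - z <• a :=
  my_ext_inner fun u => by
    simp only [RightCStarModule.inner_op_smul_right, RightCStarModule.inner_sub_right, sub_mul]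

lemma my_op_smul_add (y : E) (a b : B) : y <• (a + b) = y <• a + y <• b :=
  my_ext_inner fun u => by
    simp only [RightCStarModule.inner_op_smul_right, RightCStarModule.inner_add_right, mul_add]

lemma my_op_smul_zero (y : E) : y <• (0 : B) = 0 :=
  my_ext_inner fun u => by
    simp only [RightCStarModule.inner_op_smul_right, RightCStarModule.inner_zero_right, mul_zero]

lemma my_op_smul_smulC (y : E) (c : ℂ) (a : B) : y <• (c • a) = c • (y <• a) :=
  my_ext_inner fun u => by
    simp only [RightCStarModule.inner_op_smul_right, RightCStarModule.inner_smul_right_complex,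
      mul_smul_comm]

lemma my_norm_op_smul_le (y : E) (a : B) : ‖y <• a‖ ≤ ‖y‖ * ‖a‖ := by
  have h1 : ‖y <• a‖ ^ 2 = ‖star a * ((inner B y y : B) * a)‖ := by
    rw [RightCStarModule.norm_sq_eq, RightCStarModule.inner_op_smul_left,
      RightCStarModule.inner_op_smul_right]
  have h2 : ‖star a * ((inner B y y : B) * a)‖ ≤ ‖a‖ * (‖y‖ ^ 2 * ‖a‖) := by
    calc ‖star a * ((inner B y y : B) * a)‖ ≤ ‖star a‖ * ‖(inner B y y : B) * a‖ := norm_mul_le _ _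
    _ ≤ ‖star a‖ * (‖(inner B y y : B)‖ * ‖a‖) :=
        mul_le_mul_of_nonneg_left (norm_mul_le _ _) (norm_nonneg _)
    _ = ‖a‖ * (‖y‖ ^ 2 * ‖a‖) := by rw [norm_star, RightCStarModule.norm_sq_eq]
  nlinarith [norm_nonneg (y <• a), norm_nonneg y, norm_nonneg a,
    mul_nonneg (norm_nonneg y) (norm_nonneg a)]

lemma my_op_smul_sub_arg (y : E) (a b : B) : y <• (a - b) = y <• a - y <• b :=
  my_ext_inner fun u => by
    simp only [RightCStarModule.inner_op_smul_right, RightCStarModule.inner_sub_right, mul_sub]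

lemma my_continuous_op_smul (y : E) : Continuous (fun a : B => y <• a) := by
  refine (LipschitzWith.continuous (K := ⟨‖y‖, norm_nonneg y⟩) ?_)
  refine LipschitzWith.of_dist_le_mul fun a b => ?_
  rw [dist_eq_norm, dist_eq_norm, ← my_op_smul_sub_arg]
  exact my_norm_op_smul_le y _

end Aux

section Core
variable {B : Type*} [NonUnitalCStarAlgebra B] [PartialOrder B] [StarOrderedRing B]
variable {E : Type*} [NormedAddCommGroup E] [NormedSpace ℂ E] [SMul Bᵐᵒᵖ E] [RightCStarModule B E]

lemma my_mem_rangeIdeal {G : Set E} {k k' : E} (hk : k ∈ G) (hk' : k' ∈ G) :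
    (inner B k k' : B) ∈ rangeIdeal B G :=
  subset_closure (Submodule.subset_span ⟨k, hk, k', hk', rfl⟩)

/-- An element of the orthogonal complement kills everything in `B_G`. -/
lemma my_perp_smul {G : Set E} (hG : IsTernaryIdeal B G) {y : E} (hy : y ∈ perp B G)
    {a : B} (ha : a ∈ rangeIdeal B G) : y <• a = 0 := by
  let S : Submodule ℂ B :=
    { carrier := {a : B | y <• a = 0}
      add_mem' := fun {p q} hp hq => by
        simp only [Set.mem_setOf_eq] at *
        rw [my_op_smul_add, hp, hq, add_zero]
      zero_mem' := my_op_smul_zero y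
      smul_mem' := fun c p hp => by
        simp only [Set.mem_setOf_eq] at *
        rw [my_op_smul_smulC, hp, smul_zero] }
  have hSc : IsClosed (S : Set B) :=
    IsClosed.preimage (my_continuous_op_smul y) isClosed_singleton
  have hgen : {b : B | ∃ k ∈ G, ∃ k' ∈ G, b = (inner B k k' : B)} ⊆ (S : Set B) := by
    rintro b ⟨k, hk, k', hk', rfl⟩
    have hzG : y <• (inner B k k' : B) ∈ G := hG.2 y k' k hk
    have h0 : (inner B (y <• (inner B k k' : B)) (y <• (inner B k k' : B)) : B) = 0 := by
      rw [RightCStarModule.inner_op_smul_left, hy _ hzG, mul_zero]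
    exact RightCStarModule.inner_self.mp h0
  have hsub : rangeIdeal B G ⊆ (S : Set B) :=
    closure_minimal (Submodule.span_le.mpr hgen) hSc
  exact hsub ha

/-- Anything killing `B_G` is orthogonal to `G`. -/
lemma my_mem_perp_of_kills {G : Set E} (hG : IsTernaryIdeal B G) {y : E}
    (hy : ∀ a ∈ rangeIdeal B G, y <• a = 0) : y ∈ perp B G := by
  intro k hk
  have hgG : k <• (inner B k y : B) ∈ G := hG.2 k y k hk
  set g : E := k <• (inner B k y : B) with hgdef
  set a : B := inner B g g with hadef
  have haI : a ∈ rangeIdeal B G := my_mem_rangeIdeal hgG hgG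
  -- b * a = 0 where b = ⟪k, y⟫
  have h1 : (inner B k y : B) * a = 0 := by
    have h2 : (inner B k (y <• a) : B) = (inner B k y : B) * a :=
      RightCStarModule.inner_op_smul_right
    rw [hy a haI, RightCStarModule.inner_zero_right] at h2
    exact h2.symm
  have hA : a = star (inner B k y : B) * ((inner B k k : B) * (inner B k y : B)) := by
    rw [hadef, hgdef, RightCStarModule.inner_op_smul_left, RightCStarModule.inner_op_smul_right]
  have haa : a * a = 0 := by
    nth_rewrite 1 [hA]
    rw [mul_assoc, mul_assoc, h1, mul_zero, mul_zero]
  have ha0 : a = 0 := by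
    have hnorm : ‖a‖ * ‖a‖ = 0 := by
      rw [← CStarRing.norm_star_mul_self, RightCStarModule.isSelfAdjoint_inner_self.star_eq,
        haa, norm_zero]
    exact norm_eq_zero.mp (mul_self_eq_zero.mp hnorm)
  have hg0 : g = 0 := RightCStarModule.inner_self.mp ha0
  have hbb : star (inner B k y : B) * (inner B k y : B) = 0 := by
    have h3 : (inner B y g : B) = (inner B y k : B) * (inner B k y : B) := by
      rw [hgdef, RightCStarModule.inner_op_smul_right]
    rw [hg0, RightCStarModule.inner_zero_right] at h3
    rw [← RightCStarModule.star_inner k y] at h3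
    exact h3.symm
  have : (inner B k y : B) = 0 := (CStarRing.star_mul_self_eq_zero_iff _).mp hbb
  rw [← RightCStarModule.star_inner k y, this, star_zero]

end Core

/-- if the canonical map of `E` into the multiplier space of a closed ternary
ideal `G` takes values in `G` (every `x` acts on `B_G` like some `g ∈ G`), then
`E = G ⊕ G^⊥`, `G^⊥` is a closed ternary ideal, `G^⊥ <• B_G = 0`, and
`⟨G,G⟩·⟨G^⊥,G^⊥⟩ = 0`. -/
theorem decomposition_of_trivial_busby
    {B : Type*} [NonUnitalCStarAlgebra B] [PartialOrder B] [StarOrderedRing B]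
    {E : Type*} [NormedAddCommGroup E] [NormedSpace ℂ E] [SMul Bᵐᵒᵖ E]
    [RightCStarModule B E] [CompleteSpace E] (G : Set E) (hGc : IsClosed G) (hG : IsTernaryIdeal B G)
    (h : ∀ x : E, ∃ g ∈ G, ∀ a ∈ rangeIdeal B G, x <• a = g <• a) :
    (∀ x : E, ∃ g ∈ G, ∃ y ∈ perp B G, x = g + y) ∧
    (∀ g ∈ G, ∀ g' ∈ G, ∀ y ∈ perp B G, ∀ y' ∈ perp B G,
      g + y = g' + y' → g = g' ∧ y = y') ∧
    IsClosed (perp B G) ∧ IsTernaryIdeal B (perp B G) ∧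
    (∀ y ∈ perp B G, ∀ a ∈ rangeIdeal B G, y <• a = 0) ∧
    (∀ g ∈ G, ∀ g' ∈ G, ∀ y ∈ perp B G, ∀ y' ∈ perp B G,
      (inner B g g' : B) * (inner B y y' : B) = 0) := by
  -- existence of the decomposition
  have hdec : ∀ x : E, ∃ g ∈ G, ∃ y ∈ perp B G, x = g + y := by
    intro x
    obtain ⟨g, hgG, hga⟩ := h x
    refine ⟨g, hgG, x - g, ?_, by abel⟩
    refine my_mem_perp_of_kills hG fun a ha => ?_
    rw [my_op_smul_sub, hga a ha, sub_self]
  -- uniqueness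
  have huniq : ∀ g ∈ G, ∀ g' ∈ G, ∀ y ∈ perp B G, ∀ y' ∈ perp B G,
      g + y = g' + y' → g = g' ∧ y = y' := by
    intro g hg g' hg' y hy y' hy' heq
    have hd : g - g' = y' - y := by
      rw [sub_eq_sub_iff_add_eq_add, heq, add_comm]
    have hdG : g - g' ∈ G := by
      have := hG.1.2.1 g hg ((-1 : ℂ) • g') (hG.1.2.2 (-1) g' hg')
      rwa [neg_one_smul, ← sub_eq_add_neg] at this
    have hdP : g - g' ∈ perp B G := by
      rw [hd]
      intro s hs
      rw [RightCStarModule.inner_sub_left, hy' s hs, hy s hs, sub_self]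
    have hd0 : g - g' = 0 :=
      RightCStarModule.inner_self.mp (hdP _ hdG)
    have hgeq : g = g' := sub_eq_zero.mp hd0
    refine ⟨hgeq, ?_⟩
    have : y' - y = 0 := by rw [← hd, hd0]
    rw [← sub_eq_zero]
    rw [← neg_sub y' y, this, neg_zero]
  -- closedness
  have hclosed : IsClosed (perp B G) := by
    have hrw : perp B G = ⋂ a ∈ rangeIdeal B G, {x : E | x <• a = 0} := by
      ext x
      simp only [Set.mem_iInter, Set.mem_setOf_eq]
      exact ⟨fun hx a ha => my_perp_smul hG hx ha, fun hx => my_mem_perp_of_kills hG hx⟩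
    rw [hrw]
    refine isClosed_biInter fun a ha => isClosed_eq ?_ continuous_const
    refine (LipschitzWith.continuous (K := ⟨‖a‖, norm_nonneg a⟩) ?_)
    refine LipschitzWith.of_dist_le_mul fun x z => ?_
    rw [dist_eq_norm, dist_eq_norm, ← my_op_smul_sub]
    exact (my_norm_op_smul_le _ _).trans_eq (mul_comm _ _)
  -- perp is a ternary ideal
  have htern : ∀ (x z : E), ∀ w ∈ perp B G, x <• (inner B w z : B) ∈ perp B G := by
    intro x z w hw k hk
    obtain ⟨g, hgG, y, hyP, hx⟩ := hdec x
    have hxk : (inner B x k : B) = inner B g k := by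
      rw [hx, RightCStarModule.inner_add_left, hyP k hk, add_zero]
    have hw0 : w <• (inner B g k : B) = 0 :=
      my_perp_smul hG hw (my_mem_rangeIdeal hgG hk)
    rw [RightCStarModule.inner_op_smul_left]
    rw [← star_eq_zero, star_mul, star_star]
    have hkx : star (inner B x k : B) = inner B k g := by
      rw [RightCStarModule.star_inner, ← RightCStarModule.star_inner g k, ← hxk,
        RightCStarModule.star_inner]
    rw [hkx]
    have : (inner B k g : B) * (inner B w z : B) = inner B (w <• (inner B g k : B)) z := by
      rw [RightCStarModule.inner_op_smul_left, ← RightCStarModule.star_inner g k]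
    rw [this, hw0, RightCStarModule.inner_zero_left]
  have hperpIdeal : IsTernaryIdeal B (perp B G) := by
    refine ⟨⟨?_, ?_, ?_⟩, ?_⟩
    · intro s hs; rw [RightCStarModule.inner_zero_left]
    · intro u hu v hv s hs
      rw [RightCStarModule.inner_add_left, hu s hs, hv s hs, add_zero]
    · intro c u hu s hs
      rw [RightCStarModule.inner_smul_left_complex, hu s hs, smul_zero]
    · exact fun x z w hw => htern x z w hw
  refine ⟨hdec, huniq, hclosed, hperpIdeal, fun y hy a ha => my_perp_smul hG hy ha, ?_⟩
  -- ⟪g,g'⟫ * ⟪y,y'⟫ = 0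
  intro g hg g' hg' y hy y' hy'
  have h1 : (inner B g g' : B) * (inner B y y' : B) = inner B g (g' <• (inner B y y' : B)) := by
    rw [RightCStarModule.inner_op_smul_right]
  have h2 : g' <• (inner B y y' : B) ∈ perp B G := htern g' y' y hy
  rw [h1, ← RightCStarModule.star_inner, h2 g hg, star_zero]
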